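/- In the setup Vᵢ = (2X + (2i−1)Δ, (X+(i−1)Δ)(X+iΔ)/s), if j − i > 0 is even then segments VᵢVⱼ, V_{i+1}V_{j−1}, ... are parallel to each other and parallel to the tangent line of the parabola y = (x² − Δ²)/(4s) at the point V_{(i+j)/2}. -/

import Mathlib

/-- With `Vᵢ = (2X+(2i-1)Δ, (X+(i-1)Δ)(X+iΔ)/s)`, if `j - i = 2k > 0` is even
then the segments `VᵢVⱼ`, `Vᵢ₊₁Vⱼ₋₁`, ... are parallel to each other and to the tangent line
of the parabola `y = (x² - Δ²)/(4s)` at the point `V_{(i+j)/2} = V_{i+k}`. -/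
theorem stmt_11 (s X Δ : ℝ) (hs : s ≠ 0) (hΔ : 0 < Δ) (V : ℕ → ℝ × ℝ)
    (hV : V = fun i : ℕ => (2 * X + (2 * (i : ℝ) - 1) * Δ,
      (X + ((i : ℝ) - 1) * Δ) * (X + (i : ℝ) * Δ) / s)) :
    ∀ i k : ℕ, 0 < k →
      (((V (i + 2 * k)).2 - (V i).2) / ((V (i + 2 * k)).1 - (V i).1) =
          deriv (fun x : ℝ => (x ^ 2 - Δ ^ 2) / (4 * s)) ((V (i + k)).1)) ∧
      (∀ t : ℕ, t < k →
        ((V (i + 2 * k - t)).2 - (V (i + t)).2) / ((V (i + 2 * k - t)).1 - (V (i + t)).1) =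
          ((V (i + 2 * k)).2 - (V i).2) / ((V (i + 2 * k)).1 - (V i).1)) := by
  have key : ∀ a b : ℕ, a < b →
      ((V b).2 - (V a).2) / ((V b).1 - (V a).1) = (2 * X + ((a : ℝ) + b - 1) * Δ) / (2 * s) := by
    intro a b hab
    subst hV; simp only
    have hba : (b : ℝ) - a ≠ 0 := sub_ne_zero.2 (by exact_mod_cast hab.ne')
    have hx : (2 * X + (2 * (b : ℝ) - 1) * Δ) - (2 * X + (2 * (a : ℝ) - 1) * Δ)
        = 2 * ((b : ℝ) - a) * Δ := by ring
    rw [hx, ← sub_div, div_div]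
    rw [div_eq_div_iff (mul_ne_zero hs (mul_ne_zero (mul_ne_zero two_ne_zero hba) hΔ.ne'))
      (mul_ne_zero two_ne_zero hs)]
    ring
  intro i k hk
  have hd : deriv (fun x : ℝ => (x ^ 2 - Δ ^ 2) / (4 * s)) ((V (i + k)).1)
      = 2 * (V (i + k)).1 ^ 1 / (4 * s) :=
    (((hasDerivAt_pow 2 ((V (i + k)).1)).sub_const (Δ ^ 2)).div_const (4 * s)).deriv
  constructor
  · rw [hd, key i (i + 2 * k) (by omega), hV]
    simp only
    field_simp
    push_cast
    ring
  · intro t ht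
    rw [key i (i + 2 * k) (by omega), key (i + t) (i + 2 * k - t) (by omega)]
    congr 2
    push_cast [Nat.cast_sub (by omega : t ≤ i + 2 * k)]
    ring
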